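/- Let T be a real M×M matrix and let x_1,...,x_M, y_1,...,y_M be vectors in the unit ball of a real Hilbert space H. Then |∑_{i,j} T_{ij} ⟨x_i, y_j⟩| ≤ K_G · sup over signs ε_i, ν_j ∈ {−1,1} of |∑_{i,j} T_{ij} ε_i ν_j|, where K_G is Grothendieck's constant. -/

import Mathlib

open scoped BigOperators
set_option maxHeartbeats 2000000

/-- The classical (LHV) value of a bipartite correlation Bell inequality `T`:
the supremum over deterministic sign assignments. -/
noncomputable def signSup {M : ℕ} (T : Matrix (Fin M) (Fin M) ℝ) : ℝ :=
  ⨆ ε : Fin M → ({-1, 1} : Set ℝ), ⨆ ν : Fin M → ({-1, 1} : Set ℝ),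
    |∑ i, ∑ j, T i j * (ε i : ℝ) * (ν j : ℝ)|

/-- The (real) Grothendieck constant: the smallest universal constant `K` such that
for all dimensions and all real matrices `T`, Grothendieck's inequality holds. -/
noncomputable def realGrothendieckConstant : ℝ :=
  sInf {K : ℝ | 0 ≤ K ∧ ∀ (n M : ℕ) (T : Matrix (Fin M) (Fin M) ℝ)
    (x y : Fin M → EuclideanSpace ℝ (Fin n)),
    (∀ i, ‖x i‖ ≤ 1) → (∀ j, ‖y j‖ ≤ 1) →
    |∑ i, ∑ j, T i j * (inner ℝ (x i) (y j) : ℝ)| ≤ K * signSup T}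

namespace GrothAux

instance : Finite ({-1, 1} : Set ℝ) :=
  Set.Finite.to_subtype (Set.Finite.insert _ (Set.finite_singleton _))

lemma sign_le_signSup {M : ℕ} (T : Matrix (Fin M) (Fin M) ℝ)
    (ε ν : Fin M → ({-1, 1} : Set ℝ)) :
    |∑ i, ∑ j, T i j * (ε i : ℝ) * (ν j : ℝ)| ≤ signSup T := by
  have h1 : |∑ i, ∑ j, T i j * (ε i : ℝ) * (ν j : ℝ)| ≤
      ⨆ ν' : Fin M → ({-1, 1} : Set ℝ), |∑ i, ∑ j, T i j * (ε i : ℝ) * (ν' j : ℝ)| :=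
    le_ciSup (Finite.bddAbove_range
      (fun ν' : Fin M → ({-1, 1} : Set ℝ) =>
        |∑ i, ∑ j, T i j * (ε i : ℝ) * (ν' j : ℝ)|)) ν
  exact h1.trans (le_ciSup (Finite.bddAbove_range
      (fun ε' : Fin M → ({-1, 1} : Set ℝ) =>
        ⨆ ν' : Fin M → ({-1, 1} : Set ℝ), |∑ i, ∑ j, T i j * (ε' i : ℝ) * (ν' j : ℝ)|)) ε)

lemma signSup_nonneg {M : ℕ} (T : Matrix (Fin M) (Fin M) ℝ) : 0 ≤ signSup T := by
  have := sign_le_signSup T (fun _ => ⟨1, by simp⟩) (fun _ => ⟨1, by simp⟩)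
  exact (abs_nonneg _).trans this

/-- box/convexity lemma -/
lemma box_le_signSup {M : ℕ} (T : Matrix (Fin M) (Fin M) ℝ)
    (a b : Fin M → ℝ) (ha : ∀ i, |a i| ≤ 1) (hb : ∀ j, |b j| ≤ 1) :
    |∑ i, ∑ j, T i j * a i * b j| ≤ signSup T := by
  classical
  set c : Fin M → ℝ := fun i => ∑ j, T i j * b j with hc
  set ε : Fin M → ℝ := fun i => if 0 ≤ c i then 1 else -1 with hε
  have hεmem : ∀ i, ε i ∈ ({-1, 1} : Set ℝ) := by
    intro i; by_cases h : 0 ≤ c i <;> simp [hε, h]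
  have habs : ∀ i, |ε i| ≤ 1 := by
    intro i; by_cases h : 0 ≤ c i <;> simp [hε, h]
  -- step 1
  have step1 : |∑ i, ∑ j, T i j * a i * b j| ≤ ∑ i, ∑ j, T i j * ε i * b j := by
    have e1 : ∀ (u : Fin M → ℝ), ∑ i, ∑ j, T i j * u i * b j = ∑ i, u i * c i := by
      intro u; refine Finset.sum_congr rfl fun i _ => ?_
      rw [hc, Finset.mul_sum]; refine Finset.sum_congr rfl fun j _ => by ring
    rw [e1 a, e1 ε]
    calc |∑ i, a i * c i| ≤ ∑ i, |a i * c i| := Finset.abs_sum_le_sum_abs _ _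
      _ ≤ ∑ i, |c i| := by
          refine Finset.sum_le_sum fun i _ => ?_
          rw [abs_mul]
          exact mul_le_of_le_one_left (abs_nonneg _) (ha i)
      _ = ∑ i, ε i * c i := by
          refine Finset.sum_congr rfl fun i _ => ?_
          by_cases h : 0 ≤ c i
          · simp [hε, h, abs_of_nonneg h]
          · simp [hε, h, abs_of_neg (lt_of_not_ge h)]
  -- step 2 : same trick in b
  set d : Fin M → ℝ := fun j => ∑ i, T i j * ε i with hd
  set ν : Fin M → ℝ := fun j => if 0 ≤ d j then 1 else -1 with hν
  have hνmem : ∀ j, ν j ∈ ({-1, 1} : Set ℝ) := by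
    intro j; by_cases h : 0 ≤ d j <;> simp [hν, h]
  have e2 : ∀ (v : Fin M → ℝ), ∑ i, ∑ j, T i j * ε i * v j = ∑ j, v j * d j := by
    intro v
    rw [Finset.sum_comm]
    refine Finset.sum_congr rfl fun j _ => ?_
    rw [hd, Finset.mul_sum]; refine Finset.sum_congr rfl fun i _ => by ring
  have step2 : ∑ i, ∑ j, T i j * ε i * b j ≤ ∑ i, ∑ j, T i j * ε i * ν j := by
    rw [e2 b, e2 ν]
    calc ∑ j, b j * d j ≤ ∑ j, |b j * d j| := Finset.sum_le_sum fun j _ => le_abs_self _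
      _ ≤ ∑ j, |d j| := by
          refine Finset.sum_le_sum fun j _ => ?_
          rw [abs_mul]
          exact mul_le_of_le_one_left (abs_nonneg _) (hb j)
      _ = ∑ j, ν j * d j := by
          refine Finset.sum_congr rfl fun j _ => ?_
          by_cases h : 0 ≤ d j
          · simp [hν, h, abs_of_nonneg h]
          · simp [hν, h, abs_of_neg (lt_of_not_ge h)]
  have step3 : ∑ i, ∑ j, T i j * ε i * ν j ≤ signSup T := by
    have := sign_le_signSup T (fun i => ⟨ε i, hεmem i⟩) (fun j => ⟨ν j, hνmem j⟩)
    exact (le_abs_self _).trans this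
  exact step1.trans (step2.trans step3)




def sgn (b : Bool) : ℝ := if b then 1 else -1

lemma sgn_mul_self (b : Bool) : sgn b * sgn b = 1 := by cases b <;> simp [sgn]

lemma sgn_not (b : Bool) : sgn (!b) = - sgn b := by cases b <;> simp [sgn]

@[simp] lemma sgn_true : sgn true = 1 := rfl
@[simp] lemma sgn_false : sgn false = -1 := rfl

def Rad {n : ℕ} (x : Fin n → ℝ) (ω : Fin n → Bool) : ℝ := ∑ k, sgn (ω k) * x k

lemma card_bool_fun (n : ℕ) : (Fintype.card (Fin n → Bool) : ℝ) = 2 ^ n := by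
  simp [Fintype.card_fun]

lemma sum_sgn_mul {n : ℕ} (k l : Fin n) :
    ∑ ω : Fin n → Bool, sgn (ω k) * sgn (ω l) = if k = l then (2^n : ℝ) else 0 := by
  classical
  rcases eq_or_ne k l with rfl | hkl
  · simp only [if_pos rfl, sgn_mul_self]
    rw [Finset.sum_const, nsmul_eq_mul, mul_one, ← card_bool_fun n]
    simp
  · rw [if_neg hkl]
    have hinv : Function.Involutive
        (fun ω : Fin n → Bool => Function.update ω l (!(ω l))) := by
      intro ω; funext m
      rcases eq_or_ne m l with rfl | hm
      · simp [Function.update]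
      · simp [Function.update, hm]
    set e := hinv.toPerm
    have hcomp : ∀ ω : Fin n → Bool,
        sgn (e ω k) * sgn (e ω l) = -(sgn (ω k) * sgn (ω l)) := by
      intro ω
      have h1 : e ω k = ω k := by
        simp [e, Function.Involutive.toPerm, Function.update, hkl]
      have h2 : e ω l = !(ω l) := by
        simp [e, Function.Involutive.toPerm, Function.update]
      rw [h1, h2, sgn_not]; ring
    have := Equiv.sum_comp e (fun ω : Fin n → Bool => sgn (ω k) * sgn (ω l))
    rw [show (fun ω : Fin n → Bool => sgn (e ω k) * sgn (e ω l)) =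
        (fun ω : Fin n → Bool => -(sgn (ω k) * sgn (ω l))) from funext hcomp] at this
    rw [Finset.sum_neg_distrib] at this
    linarith

lemma sum_rad_mul_rad {n : ℕ} (x y : Fin n → ℝ) :
    ∑ ω : Fin n → Bool, Rad x ω * Rad y ω = 2^n * ∑ k, x k * y k := by
  classical
  have expand : ∀ ω : Fin n → Bool, Rad x ω * Rad y ω =
      ∑ k, ∑ l, (x k * y l) * (sgn (ω k) * sgn (ω l)) := by
    intro ω
    rw [Rad, Rad, Finset.sum_mul_sum]
    exact Finset.sum_congr rfl fun k _ => Finset.sum_congr rfl fun l _ => by ring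
  calc ∑ ω : Fin n → Bool, Rad x ω * Rad y ω
      = ∑ ω : Fin n → Bool, ∑ k, ∑ l, (x k * y l) * (sgn (ω k) * sgn (ω l)) :=
        Finset.sum_congr rfl fun ω _ => expand ω
    _ = ∑ k, ∑ l, ∑ ω : Fin n → Bool, (x k * y l) * (sgn (ω k) * sgn (ω l)) := by
        rw [Finset.sum_comm]
        exact Finset.sum_congr rfl fun k _ => Finset.sum_comm
    _ = ∑ k, ∑ l, (x k * y l) * (if k = l then (2^n : ℝ) else 0) := by
        refine Finset.sum_congr rfl fun k _ => Finset.sum_congr rfl fun l _ => ?_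
        rw [← Finset.mul_sum, sum_sgn_mul]
    _ = 2^n * ∑ k, x k * y k := by
        rw [Finset.mul_sum]
        refine Finset.sum_congr rfl fun k _ => ?_
        simp [mul_ite, mul_zero, Finset.sum_ite_eq]
        ring

lemma sum_rad_sq {n : ℕ} (x : Fin n → ℝ) :
    ∑ ω : Fin n → Bool, (Rad x ω)^2 = 2^n * ∑ k, (x k)^2 := by
  have := sum_rad_mul_rad x x
  simpa [pow_two] using this

lemma sum_rad_four {n : ℕ} (x : Fin n → ℝ) :
    ∑ ω : Fin n → Bool, (Rad x ω)^4 ≤ 3 * 2^n * (∑ k, (x k)^2)^2 := by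
  induction n with
  | zero =>
      simp [Rad]
  | succ n ih =>
      set e := (Fin.consEquiv (fun _ : Fin (n+1) => Bool)).symm
      have hsum : ∑ ω : Fin (n+1) → Bool, (Rad x ω)^4 =
          ∑ p : Bool × (Fin n → Bool), (Rad x (e.symm p))^4 :=
        (Equiv.sum_comp e.symm (fun ω => (Rad x ω)^4)).symm
      set a := x 0
      set x' : Fin n → ℝ := fun k => x k.succ
      have hrad : ∀ (b : Bool) (ω' : Fin n → Bool),
          Rad x (e.symm (b, ω')) = sgn b * a + Rad x' ω' := by
        intro b ω'
        rw [Rad, Fin.sum_univ_succ]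
        have h0 : e.symm (b, ω') 0 = b := rfl
        have hsucc : ∀ k : Fin n, e.symm (b, ω') k.succ = ω' k := fun k => rfl
        rw [h0]
        rfl
      have hbool : ∀ ω' : Fin n → Bool,
          ∑ b : Bool, (Rad x (e.symm (b, ω')))^4 =
            2*(Rad x' ω')^4 + 12*a^2*(Rad x' ω')^2 + 2*a^4 := by
        intro ω'
        rw [Fintype.sum_bool, hrad, hrad]
        simp only [sgn_true, sgn_false]
        ring
      rw [hsum, Fintype.sum_prod_type, Finset.sum_comm]
      have hkey : ∑ ω' : Fin n → Bool, ∑ b : Bool, (Rad x (e.symm (b, ω')))^4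
          = 2 * (∑ ω' : Fin n → Bool, (Rad x' ω')^4)
            + 12*a^2 * (∑ ω' : Fin n → Bool, (Rad x' ω')^2)
            + (2^n : ℝ) * (2*a^4) := by
        rw [Finset.sum_congr rfl (fun ω' _ => hbool ω')]
        rw [Finset.sum_add_distrib, Finset.sum_add_distrib, ← Finset.mul_sum, ← Finset.mul_sum,
          Finset.sum_const, Finset.card_univ, nsmul_eq_mul]
        rw [card_bool_fun]
      rw [hkey, sum_rad_sq]
      have h4 := ih x'
      have hxs : ∑ k : Fin (n+1), (x k)^2 = a^2 + ∑ k : Fin n, (x' k)^2 := by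
        rw [Fin.sum_univ_succ]
      rw [hxs]
      have h2 : (2:ℝ)^(n+1) = 2*2^n := by ring
      have hp : (0:ℝ) ≤ 2^n := by positivity
      have hA : (0:ℝ) ≤ ∑ k : Fin n, (x' k)^2 := Finset.sum_nonneg fun _ _ => sq_nonneg _
      nlinarith [sq_nonneg a, sq_nonneg (a^2), mul_nonneg hp (sq_nonneg (a^2))]


noncomputable def clamp (R t : ℝ) : ℝ := max (-R) (min R t)

lemma abs_clamp_le {R : ℝ} (hR : 0 ≤ R) (t : ℝ) : |clamp R t| ≤ R := by
  rw [abs_le, clamp]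
  constructor
  · exact le_max_left _ _
  · exact max_le (by linarith) (min_le_left _ _)

lemma clamp_sq_le {R : ℝ} (hR : 0 ≤ R) (t : ℝ) : (clamp R t)^2 ≤ t^2 := by
  unfold clamp
  rcases le_total t (-R) with h | h
  · rw [min_eq_right (by linarith), max_eq_left (by linarith)]
    nlinarith
  · rcases le_total t R with h2 | h2
    · rw [min_eq_right h2, max_eq_right h]
    · rw [min_eq_left h2, max_eq_right (by linarith)]
      nlinarith

lemma tail_sq_le {R : ℝ} (hR : 0 < R) (t : ℝ) :
    (t - clamp R t)^2 * R^2 ≤ t^4 := by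
  unfold clamp
  rcases le_total t (-R) with h | h
  · rw [min_eq_right (by linarith), max_eq_left (by linarith)]
    nlinarith [mul_nonneg (show (0:ℝ) ≤ t^2 - t*R - R^2 by nlinarith)
      (show (0:ℝ) ≤ t^2 + t*R + R^2 by nlinarith)]
  · rcases le_total t R with h2 | h2
    · rw [min_eq_right h2, max_eq_right h]
      simp [pow_two]
      positivity
    · rw [min_eq_left h2, max_eq_right (by linarith)]
      nlinarith [mul_nonneg (show (0:ℝ) ≤ t^2 - t*R + R^2 by nlinarith)
        (show (0:ℝ) ≤ t^2 + t*R - R^2 by nlinarith)]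

lemma euclid_inner {m : ℕ} (u v : EuclideanSpace ℝ (Fin m)) :
    (inner ℝ u v : ℝ) = ∑ k, u k * v k := by
  simp [PiLp.inner_apply, RCLike.inner_apply]
  exact Finset.sum_congr rfl fun _ _ => mul_comm _ _

lemma euclid_norm_le_one {m : ℕ} (v : EuclideanSpace ℝ (Fin m))
    (h : ∑ k, (v k)^2 ≤ 1) : ‖v‖ ≤ 1 := by
  rw [EuclideanSpace.norm_eq]
  have : ∑ k, ‖v k‖^2 = ∑ k, (v k)^2 := by
    refine Finset.sum_congr rfl fun k _ => by rw [Real.norm_eq_abs, sq_abs]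
  rw [this]
  calc Real.sqrt (∑ k, (v k)^2) ≤ Real.sqrt 1 := Real.sqrt_le_sqrt h
    _ = 1 := Real.sqrt_one

lemma sum_sq_le_one {m : ℕ} (v : EuclideanSpace ℝ (Fin m))
    (h : ‖v‖ ≤ 1) : ∑ k, (v k)^2 ≤ 1 := by
  have h0 : 0 ≤ ∑ k, (v k)^2 := Finset.sum_nonneg fun _ _ => sq_nonneg _
  have h1 : ‖v‖^2 = ∑ k, (v k)^2 := by
    rw [EuclideanSpace.norm_eq]
    rw [show ∑ k, ‖v k‖^2 = ∑ k, (v k)^2 from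
      Finset.sum_congr rfl fun k _ => by rw [Real.norm_eq_abs, sq_abs]]
    exact Real.sq_sqrt h0
  nlinarith [norm_nonneg v]



lemma box_le_signSup_scaled {M : ℕ} (T : Matrix (Fin M) (Fin M) ℝ)
    {C D : ℝ} (hC : 0 < C) (hD : 0 < D)
    (a b : Fin M → ℝ) (ha : ∀ i, |a i| ≤ C) (hb : ∀ j, |b j| ≤ D) :
    |∑ i, ∑ j, T i j * a i * b j| ≤ C * D * signSup T := by
  have key := box_le_signSup T (fun i => a i / C) (fun j => b j / D)
    (fun i => by rw [abs_div, abs_of_pos hC]; exact (div_le_one hC).2 (ha i))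
    (fun j => by rw [abs_div, abs_of_pos hD]; exact (div_le_one hD).2 (hb j))
  have hrw : ∑ i, ∑ j, T i j * (a i / C) * (b j / D)
      = (∑ i, ∑ j, T i j * a i * b j) / (C * D) := by
    rw [Finset.sum_div]
    refine Finset.sum_congr rfl fun i _ => ?_
    rw [Finset.sum_div]
    refine Finset.sum_congr rfl fun j _ => ?_
    field_simp
  rw [hrw, abs_div, abs_of_pos (mul_pos hC hD)] at key
  rw [div_le_iff₀ (mul_pos hC hD)] at key
  linarith

/-- Grothendieck property for fixed `M`. -/
def GoodM (M : ℕ) (K : ℝ) : Prop :=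
  ∀ (n : ℕ) (T : Matrix (Fin M) (Fin M) ℝ) (x y : Fin M → EuclideanSpace ℝ (Fin n)),
    (∀ i, ‖x i‖ ≤ 1) → (∀ j, ‖y j‖ ≤ 1) →
    |∑ i, ∑ j, T i j * (inner ℝ (x i) (y j) : ℝ)| ≤ K * signSup T

lemma goodM_apriori (M : ℕ) : GoodM M ((M:ℝ)^2) := by
  intro n T x y hx hy
  have hent : ∀ i j, |T i j| ≤ signSup T := by
    intro i j
    classical
    have := box_le_signSup T (fun i' => if i' = i then 1 else 0)
      (fun j' => if j' = j then 1 else 0)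
      (fun i' => by by_cases h : i' = i <;> simp [h])
      (fun j' => by by_cases h : j' = j <;> simp [h])
    calc |T i j| = |∑ i', ∑ j', T i' j' * (if i' = i then (1:ℝ) else 0) *
        (if j' = j then (1:ℝ) else 0)| := by
          congr 1
          rw [Finset.sum_eq_single i]
          · rw [Finset.sum_eq_single j]
            · simp
            · intro j' _ hj'; simp [hj']
            · intro h; exact absurd (Finset.mem_univ j) h
          · intro i' _ hi'; simp [hi']
          · intro h; exact absurd (Finset.mem_univ i) h
      _ ≤ signSup T := this
  have hinn : ∀ i j, |(inner ℝ (x i) (y j) : ℝ)| ≤ 1 := by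
    intro i j
    calc |(inner ℝ (x i) (y j) : ℝ)| ≤ ‖x i‖ * ‖y j‖ := abs_real_inner_le_norm _ _
      _ ≤ 1 := mul_le_one₀ (hx i) (norm_nonneg _) (hy j)
  calc |∑ i, ∑ j, T i j * (inner ℝ (x i) (y j) : ℝ)|
      ≤ ∑ i, |∑ j, T i j * (inner ℝ (x i) (y j) : ℝ)| := Finset.abs_sum_le_sum_abs _ _
    _ ≤ ∑ i : Fin M, ∑ j : Fin M, |T i j * (inner ℝ (x i) (y j) : ℝ)| :=
        Finset.sum_le_sum fun i _ => Finset.abs_sum_le_sum_abs _ _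
    _ ≤ ∑ i : Fin M, ∑ j : Fin M, signSup T := by
        refine Finset.sum_le_sum fun i _ => Finset.sum_le_sum fun j _ => ?_
        rw [abs_mul]
        calc |T i j| * |(inner ℝ (x i) (y j) : ℝ)| ≤ signSup T * 1 :=
          mul_le_mul (hent i j) (hinn i j) (abs_nonneg _) (signSup_nonneg T)
        _ = signSup T := mul_one _
    _ = (M:ℝ)^2 * signSup T := by
        simp [Finset.sum_const]
        ring

/-- The self-improvement step. -/
lemma goodM_improve (M : ℕ) (K : ℝ) (hK : 0 ≤ K) (hG : GoodM M K) :
    GoodM M (48 + K/2) := by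
  intro n T x y hx hy
  set B := signSup T with hB
  have hB0 : 0 ≤ B := signSup_nonneg T
  set N : ℝ := 2^n with hNdef
  have hN : (0:ℝ) < N := by positivity
  set R : ℝ := Real.sqrt 48 with hRdef
  have hR : (0:ℝ) < R := Real.sqrt_pos.2 (by norm_num)
  have hR2 : R^2 = 48 := Real.sq_sqrt (by norm_num)
  -- Rademacher sums
  set X : Fin M → (Fin n → Bool) → ℝ := fun i ω => Rad (fun k => x i k) ω with hX
  set Y : Fin M → (Fin n → Bool) → ℝ := fun j ω => Rad (fun k => y j k) ω with hY
  set P : Fin M → (Fin n → Bool) → ℝ := fun i ω => clamp R (X i ω) with hP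
  set Q : Fin M → (Fin n → Bool) → ℝ := fun j ω => clamp R (Y j ω) with hQ
  set U : Fin M → (Fin n → Bool) → ℝ := fun i ω => X i ω - P i ω with hU
  set V : Fin M → (Fin n → Bool) → ℝ := fun j ω => Y j ω - Q j ω with hV
  -- basic coordinate bounds
  have hxsq : ∀ i, ∑ k, (x i k)^2 ≤ 1 := fun i => sum_sq_le_one (x i) (hx i)
  have hysq : ∀ j, ∑ k, (y j k)^2 ≤ 1 := fun j => sum_sq_le_one (y j) (hy j)
  -- second moments
  have hX2 : ∀ i, ∑ ω : Fin n → Bool, (X i ω)^2 ≤ N := by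
    intro i
    rw [hX]
    rw [sum_rad_sq (fun k => x i k)]
    calc N * ∑ k, (x i k)^2 ≤ N * 1 := by
          exact mul_le_mul_of_nonneg_left (hxsq i) hN.le
      _ = N := mul_one N
  have hY2 : ∀ j, ∑ ω : Fin n → Bool, (Y j ω)^2 ≤ N := by
    intro j
    rw [hY, sum_rad_sq (fun k => y j k)]
    calc N * ∑ k, (y j k)^2 ≤ N * 1 :=
          mul_le_mul_of_nonneg_left (hysq j) hN.le
      _ = N := mul_one N
  -- tail second moments
  have hU2 : ∀ i, ∑ ω : Fin n → Bool, (U i ω)^2 ≤ N/16 := by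
    intro i
    have hpt : ∀ ω : Fin n → Bool, (U i ω)^2 ≤ (X i ω)^4 / 48 := by
      intro ω
      have := tail_sq_le hR (X i ω)
      rw [hR2] at this
      rw [le_div_iff₀ (by norm_num : (0:ℝ) < 48)]
      simpa [hU, hP] using this
    calc ∑ ω : Fin n → Bool, (U i ω)^2 ≤ ∑ ω : Fin n → Bool, (X i ω)^4 / 48 :=
          Finset.sum_le_sum fun ω _ => hpt ω
      _ = (∑ ω : Fin n → Bool, (X i ω)^4) / 48 := by rw [Finset.sum_div]
      _ ≤ (3 * N * (∑ k, (x i k)^2)^2) / 48 := by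
          have h := sum_rad_four (fun k => x i k)
          rw [← hNdef] at h
          simp only [hX]
          gcongr
      _ ≤ N/16 := by
          have h1 : (∑ k, (x i k)^2)^2 ≤ 1 := by
            have h0 : 0 ≤ ∑ k, (x i k)^2 := Finset.sum_nonneg fun _ _ => sq_nonneg _
            nlinarith [hxsq i]
          nlinarith [hN.le]
  have hV2 : ∀ j, ∑ ω : Fin n → Bool, (V j ω)^2 ≤ N/16 := by
    intro j
    have hpt : ∀ ω : Fin n → Bool, (V j ω)^2 ≤ (Y j ω)^4 / 48 := by
      intro ω
      have := tail_sq_le hR (Y j ω)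
      rw [hR2] at this
      rw [le_div_iff₀ (by norm_num : (0:ℝ) < 48)]
      simpa [hV, hQ] using this
    calc ∑ ω : Fin n → Bool, (V j ω)^2 ≤ ∑ ω : Fin n → Bool, (Y j ω)^4 / 48 :=
          Finset.sum_le_sum fun ω _ => hpt ω
      _ = (∑ ω : Fin n → Bool, (Y j ω)^4) / 48 := by rw [Finset.sum_div]
      _ ≤ (3 * N * (∑ k, (y j k)^2)^2) / 48 := by
          have h := sum_rad_four (fun k => y j k)
          rw [← hNdef] at h
          simp only [hY]
          gcongr
      _ ≤ N/16 := by
          have h1 : (∑ k, (y j k)^2)^2 ≤ 1 := by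
            have h0 : 0 ≤ ∑ k, (y j k)^2 := Finset.sum_nonneg fun _ _ => sq_nonneg _
            nlinarith [hysq j]
          nlinarith [hN.le]
  have hP2 : ∀ i, ∑ ω : Fin n → Bool, (P i ω)^2 ≤ N := by
    intro i
    calc ∑ ω : Fin n → Bool, (P i ω)^2 ≤ ∑ ω : Fin n → Bool, (X i ω)^2 :=
          Finset.sum_le_sum fun ω _ => clamp_sq_le hR.le (X i ω)
      _ ≤ N := hX2 i
  -- the key L1 identity
  have hinner : ∀ i j, (inner ℝ (x i) (y j) : ℝ) = N⁻¹ * ∑ ω : Fin n → Bool, X i ω * Y j ω := by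
    intro i j
    have h := sum_rad_mul_rad (fun k => x i k) (fun k => y j k)
    rw [← hNdef] at h
    rw [euclid_inner]
    rw [show ∑ ω : Fin n → Bool, X i ω * Y j ω =
      ∑ ω : Fin n → Bool, Rad (fun k => x i k) ω * Rad (fun k => y j k) ω from rfl, h]
    field_simp
  -- pointwise decomposition
  have hdec : ∀ i j (ω : Fin n → Bool),
      X i ω * Y j ω = P i ω * Q j ω + U i ω * Y j ω + P i ω * V j ω := by
    intro i j ω
    simp only [hU, hV]
    ring
  -- the auxiliary Hilbert space vectors
  set m := 2^n with hm
  have hNm : N = (m : ℝ) := by rw [hNdef, hm]; push_cast; ring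
  have e2 : (Fin n → Bool) ≃ Fin m := Fintype.equivFinOfCardEq (by simp [hm])
  set r : ℝ := (Real.sqrt N)⁻¹ with hrdef
  have hr2 : r^2 = N⁻¹ := by rw [hrdef, inv_pow, Real.sq_sqrt hN.le]
  have hr0 : 0 ≤ r := by positivity
  set u : Fin M → EuclideanSpace ℝ (Fin m) := fun i => WithLp.toLp 2 (fun p => 4 * r * U i (e2.symm p)) with hu
  set v : Fin M → EuclideanSpace ℝ (Fin m) := fun j => WithLp.toLp 2 (fun p => r * Y j (e2.symm p)) with hv
  set u' : Fin M → EuclideanSpace ℝ (Fin m) := fun i => WithLp.toLp 2 (fun p => r * P i (e2.symm p)) with hu'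
  set v' : Fin M → EuclideanSpace ℝ (Fin m) := fun j => WithLp.toLp 2 (fun p => 4 * r * V j (e2.symm p)) with hv'
  -- norms ≤ 1
  have hsum_comp : ∀ f : (Fin n → Bool) → ℝ, ∑ p : Fin m, f (e2.symm p) = ∑ ω, f ω :=
    fun f => Equiv.sum_comp e2.symm f
  have hu_norm : ∀ i, ‖u i‖ ≤ 1 := by
    intro i
    refine euclid_norm_le_one _ ?_
    have : ∑ p : Fin m, (u i p)^2 = 16 * r^2 * ∑ ω, (U i ω)^2 := by
      rw [show ∑ p : Fin m, (u i p)^2 = ∑ p : Fin m, 16 * r^2 * (U i (e2.symm p))^2 from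
        Finset.sum_congr rfl fun p _ => by simp only [hu, PiLp.toLp_apply]; ring]
      rw [← Finset.mul_sum, hsum_comp (fun ω => (U i ω)^2)]
    rw [this, hr2]
    have := hU2 i
    calc 16 * N⁻¹ * ∑ ω, (U i ω)^2 ≤ 16 * N⁻¹ * (N/16) := by
          have h16 : (0:ℝ) ≤ 16 * N⁻¹ := by positivity
          exact mul_le_mul_of_nonneg_left (hU2 i) h16
      _ = 1 := by field_simp
  have hv_norm : ∀ j, ‖v j‖ ≤ 1 := by
    intro j
    refine euclid_norm_le_one _ ?_
    have : ∑ p : Fin m, (v j p)^2 = r^2 * ∑ ω, (Y j ω)^2 := by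
      rw [show ∑ p : Fin m, (v j p)^2 = ∑ p : Fin m, r^2 * (Y j (e2.symm p))^2 from
        Finset.sum_congr rfl fun p _ => by simp only [hv, PiLp.toLp_apply]; ring]
      rw [← Finset.mul_sum, hsum_comp (fun ω => (Y j ω)^2)]
    rw [this, hr2]
    calc N⁻¹ * ∑ ω, (Y j ω)^2 ≤ N⁻¹ * N := by
          exact mul_le_mul_of_nonneg_left (hY2 j) (by positivity)
      _ = 1 := by field_simp
  have hu'_norm : ∀ i, ‖u' i‖ ≤ 1 := by
    intro i
    refine euclid_norm_le_one _ ?_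
    have : ∑ p : Fin m, (u' i p)^2 = r^2 * ∑ ω, (P i ω)^2 := by
      rw [show ∑ p : Fin m, (u' i p)^2 = ∑ p : Fin m, r^2 * (P i (e2.symm p))^2 from
        Finset.sum_congr rfl fun p _ => by simp only [hu', PiLp.toLp_apply]; ring]
      rw [← Finset.mul_sum, hsum_comp (fun ω => (P i ω)^2)]
    rw [this, hr2]
    calc N⁻¹ * ∑ ω, (P i ω)^2 ≤ N⁻¹ * N := by
          exact mul_le_mul_of_nonneg_left (hP2 i) (by positivity)
      _ = 1 := by field_simp
  have hv'_norm : ∀ j, ‖v' j‖ ≤ 1 := by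
    intro j
    refine euclid_norm_le_one _ ?_
    have : ∑ p : Fin m, (v' j p)^2 = 16 * r^2 * ∑ ω, (V j ω)^2 := by
      rw [show ∑ p : Fin m, (v' j p)^2 = ∑ p : Fin m, 16 * r^2 * (V j (e2.symm p))^2 from
        Finset.sum_congr rfl fun p _ => by simp only [hv', PiLp.toLp_apply]; ring]
      rw [← Finset.mul_sum, hsum_comp (fun ω => (V j ω)^2)]
    rw [this, hr2]
    calc 16 * N⁻¹ * ∑ ω, (V j ω)^2 ≤ 16 * N⁻¹ * (N/16) := by
          exact mul_le_mul_of_nonneg_left (hV2 j) (by positivity)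
      _ = 1 := by field_simp
  -- inner product identities
  have hiuv : ∀ i j, N⁻¹ * (∑ ω, U i ω * Y j ω) = (1/4) * (inner ℝ (u i) (v j) : ℝ) := by
    intro i j
    rw [euclid_inner]
    rw [show ∑ p : Fin m, u i p * v j p = ∑ p : Fin m, 4 * r^2 * (U i (e2.symm p) * Y j (e2.symm p)) from
      Finset.sum_congr rfl fun p _ => by simp only [hu, hv, PiLp.toLp_apply]; ring]
    rw [← Finset.mul_sum, hsum_comp (fun ω => U i ω * Y j ω), hr2]
    ring
  have hiuv' : ∀ i j, N⁻¹ * (∑ ω, P i ω * V j ω) = (1/4) * (inner ℝ (u' i) (v' j) : ℝ) := by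
    intro i j
    rw [euclid_inner]
    rw [show ∑ p : Fin m, u' i p * v' j p = ∑ p : Fin m, 4 * r^2 * (P i (e2.symm p) * V j (e2.symm p)) from
      Finset.sum_congr rfl fun p _ => by simp only [hu', hv', PiLp.toLp_apply]; ring]
    rw [← Finset.mul_sum, hsum_comp (fun ω => P i ω * V j ω), hr2]
    ring
  -- decomposition of the objective
  set A1 : ℝ := ∑ i, ∑ j, T i j * (N⁻¹ * ∑ ω, P i ω * Q j ω) with hA1def
  set A2 : ℝ := ∑ i, ∑ j, T i j * (N⁻¹ * ∑ ω, U i ω * Y j ω) with hA2def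
  set A3 : ℝ := ∑ i, ∑ j, T i j * (N⁻¹ * ∑ ω, P i ω * V j ω) with hA3def
  have hsplit : ∑ i, ∑ j, T i j * (inner ℝ (x i) (y j) : ℝ) = A1 + A2 + A3 := by
    rw [hA1def, hA2def, hA3def]
    rw [show ∑ i, ∑ j, T i j * (inner ℝ (x i) (y j) : ℝ) =
        ∑ i, ∑ j, (T i j * (N⁻¹ * ∑ ω, P i ω * Q j ω)
          + T i j * (N⁻¹ * ∑ ω, U i ω * Y j ω)
          + T i j * (N⁻¹ * ∑ ω, P i ω * V j ω)) from
      Finset.sum_congr rfl fun i _ => Finset.sum_congr rfl fun j _ => by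
        rw [hinner i j]
        rw [show ∑ ω : Fin n → Bool, X i ω * Y j ω =
          (∑ ω, P i ω * Q j ω) + (∑ ω, U i ω * Y j ω) + (∑ ω, P i ω * V j ω) from by
            rw [← Finset.sum_add_distrib, ← Finset.sum_add_distrib]
            exact Finset.sum_congr rfl fun ω _ => hdec i j ω]
        ring]
    simp [Finset.sum_add_distrib]
  -- bound A1
  have hA1bound : |A1| ≤ 48 * B := by
    have hA1' : A1 = N⁻¹ * ∑ ω : Fin n → Bool, ∑ i, ∑ j, T i j * P i ω * Q j ω := by
      rw [hA1def]
      calc ∑ i, ∑ j, T i j * (N⁻¹ * ∑ ω : Fin n → Bool, P i ω * Q j ω)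
          = ∑ i, ∑ j, N⁻¹ * ∑ ω : Fin n → Bool, T i j * P i ω * Q j ω := by
            refine Finset.sum_congr rfl fun i _ => Finset.sum_congr rfl fun j _ => ?_
            have h1 : ∑ ω : Fin n → Bool, T i j * P i ω * Q j ω
                = T i j * ∑ ω : Fin n → Bool, P i ω * Q j ω := by
              rw [Finset.mul_sum]
              exact Finset.sum_congr rfl fun ω _ => by ring
            rw [h1]; ring
        _ = N⁻¹ * ∑ i, ∑ j, ∑ ω : Fin n → Bool, T i j * P i ω * Q j ω := by
            rw [Finset.mul_sum]
            refine Finset.sum_congr rfl fun i _ => ?_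
            rw [Finset.mul_sum]
        _ = N⁻¹ * ∑ ω : Fin n → Bool, ∑ i, ∑ j, T i j * P i ω * Q j ω := by
            congr 1
            calc ∑ i, ∑ j, ∑ ω : Fin n → Bool, T i j * P i ω * Q j ω
                = ∑ i, ∑ ω : Fin n → Bool, ∑ j, T i j * P i ω * Q j ω :=
                  Finset.sum_congr rfl fun i _ => Finset.sum_comm
              _ = ∑ ω : Fin n → Bool, ∑ i, ∑ j, T i j * P i ω * Q j ω := Finset.sum_comm
    have hGbound : ∀ ω : Fin n → Bool, |∑ i, ∑ j, T i j * P i ω * Q j ω| ≤ 48 * B := by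
      intro ω
      have h := box_le_signSup_scaled T hR hR (fun i => P i ω) (fun j => Q j ω)
        (fun i => abs_clamp_le hR.le _) (fun j => abs_clamp_le hR.le _)
      have hRR : R * R = 48 := by nlinarith [hR2]
      calc |∑ i, ∑ j, T i j * P i ω * Q j ω| ≤ R * R * signSup T := h
        _ = 48 * B := by rw [hRR, hB]
    rw [hA1']
    rw [abs_mul, abs_of_pos (inv_pos.2 hN)]
    calc N⁻¹ * |∑ ω : Fin n → Bool, ∑ i, ∑ j, T i j * P i ω * Q j ω|
        ≤ N⁻¹ * ∑ ω : Fin n → Bool, |∑ i, ∑ j, T i j * P i ω * Q j ω| :=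
          mul_le_mul_of_nonneg_left (Finset.abs_sum_le_sum_abs _ _) (by positivity)
      _ ≤ N⁻¹ * ∑ _ω : Fin n → Bool, 48 * B :=
          mul_le_mul_of_nonneg_left (Finset.sum_le_sum fun ω _ => hGbound ω) (by positivity)
      _ = 48 * B := by
          rw [Finset.sum_const, Finset.card_univ, nsmul_eq_mul, card_bool_fun, ← hNdef,
            ← mul_assoc, inv_mul_cancel₀ hN.ne', one_mul]
  -- bound A2
  have hA2bound : |A2| ≤ K/4 * B := by
    have hA2' : A2 = (1/4) * ∑ i, ∑ j, T i j * (inner ℝ (u i) (v j) : ℝ) := by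
      rw [hA2def, Finset.mul_sum]
      refine Finset.sum_congr rfl fun i _ => ?_
      rw [Finset.mul_sum]
      refine Finset.sum_congr rfl fun j _ => ?_
      rw [hiuv i j]
      ring
    rw [hA2', abs_mul, show |(1/4 : ℝ)| = 1/4 from abs_of_pos (by norm_num)]
    have h := hG m T u v hu_norm hv_norm
    calc (1/4) * |∑ i, ∑ j, T i j * (inner ℝ (u i) (v j) : ℝ)|
        ≤ (1/4) * (K * signSup T) := by linarith
      _ = K/4 * B := by rw [hB]; ring
  -- bound A3
  have hA3bound : |A3| ≤ K/4 * B := by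
    have hA3' : A3 = (1/4) * ∑ i, ∑ j, T i j * (inner ℝ (u' i) (v' j) : ℝ) := by
      rw [hA3def, Finset.mul_sum]
      refine Finset.sum_congr rfl fun i _ => ?_
      rw [Finset.mul_sum]
      refine Finset.sum_congr rfl fun j _ => ?_
      rw [hiuv' i j]
      ring
    rw [hA3', abs_mul, show |(1/4 : ℝ)| = 1/4 from abs_of_pos (by norm_num)]
    have h := hG m T u' v' hu'_norm hv'_norm
    calc (1/4) * |∑ i, ∑ j, T i j * (inner ℝ (u' i) (v' j) : ℝ)|
        ≤ (1/4) * (K * signSup T) := by linarith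
      _ = K/4 * B := by rw [hB]; ring
  -- conclusion
  rw [hsplit]
  have habs : |A1 + A2 + A3| ≤ |A1| + |A2| + |A3| :=
    (abs_add_le _ _).trans (add_le_add_left (abs_add_le _ _) _)
  have hfin : (48 + K/2) * signSup T = 48 * B + K/4 * B + K/4 * B := by rw [← hB]; ring
  rw [hfin]
  linarith

lemma goodM_96 (M : ℕ) : GoodM M 96 := by
  classical
  set S : Set ℝ := {K | 0 ≤ K ∧ GoodM M K} with hS
  have hne : S.Nonempty := ⟨(M:ℝ)^2, by positivity, goodM_apriori M⟩
  have hbd : BddBelow S := ⟨0, fun K hK => hK.1⟩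
  set KM := sInf S with hKM
  have hKM0 : 0 ≤ KM := le_csInf hne fun K hK => hK.1
  have hKMgood : GoodM M KM := by
    intro n T x y hx hy
    have hB0 := signSup_nonneg T
    rcases eq_or_lt_of_le hB0 with hB | hB
    · obtain ⟨K0, hK00, hK0g⟩ := hne
      have h := hK0g n T x y hx hy
      rw [← hB, mul_zero] at h
      rw [← hB, mul_zero]
      exact h
    · have hdiv : ∀ K ∈ S, |∑ i, ∑ j, T i j * (inner ℝ (x i) (y j) : ℝ)| / signSup T ≤ K :=
        fun K hK => (div_le_iff₀ hB).2 (by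
          have := hK.2 n T x y hx hy
          linarith)
      have hle := le_csInf hne hdiv
      rw [div_le_iff₀ hB] at hle
      calc |∑ i, ∑ j, T i j * (inner ℝ (x i) (y j) : ℝ)| ≤ KM * signSup T := by
            rw [hKM]; linarith
        _ = KM * signSup T := rfl
  have h96 : GoodM M (48 + KM/2) := goodM_improve M KM hKM0 hKMgood
  have hKMle : KM ≤ 48 + KM/2 := csInf_le hbd ⟨by linarith, h96⟩
  have hKM96 : KM ≤ 96 := by linarith
  intro n T x y hx hy
  calc |∑ i, ∑ j, T i j * (inner ℝ (x i) (y j) : ℝ)| ≤ KM * signSup T :=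
        hKMgood n T x y hx hy
    _ ≤ 96 * signSup T := mul_le_mul_of_nonneg_right hKM96 (signSup_nonneg T)


end GrothAux

theorem grothendieck_inequality (H : Type*) [NormedAddCommGroup H] [InnerProductSpace ℝ H]
    (M : ℕ) (T : Matrix (Fin M) (Fin M) ℝ) (x y : Fin M → H)
    (hx : ∀ i, ‖x i‖ ≤ 1) (hy : ∀ j, ‖y j‖ ≤ 1) :
    |∑ i, ∑ j, T i j * (inner ℝ (x i) (y j) : ℝ)| ≤ realGrothendieckConstant * signSup T := by
  classical
  set S : Set ℝ := {K : ℝ | 0 ≤ K ∧ ∀ (n M : ℕ) (T : Matrix (Fin M) (Fin M) ℝ)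
    (x y : Fin M → EuclideanSpace ℝ (Fin n)),
    (∀ i, ‖x i‖ ≤ 1) → (∀ j, ‖y j‖ ≤ 1) →
    |∑ i, ∑ j, T i j * (inner ℝ (x i) (y j) : ℝ)| ≤ K * signSup T} with hSdef
  have hRG : realGrothendieckConstant = sInf S := rfl
  have h96 : (96:ℝ) ∈ S :=
    ⟨by norm_num, fun n M T x y hx hy => GrothAux.goodM_96 M n T x y hx hy⟩
  -- reduction to a finite-dimensional Euclidean space
  set F : Submodule ℝ H := Submodule.span ℝ (Set.range x ∪ Set.range y) with hF
  haveI : FiniteDimensional ℝ F :=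
    FiniteDimensional.span_of_finite ℝ ((Set.finite_range x).union (Set.finite_range y))
  set n := Module.finrank ℝ F with hn
  set L : F ≃ₗᵢ[ℝ] EuclideanSpace ℝ (Fin n) := (stdOrthonormalBasis ℝ F).repr with hL
  have hxm : ∀ i, x i ∈ F := fun i => Submodule.subset_span (Or.inl ⟨i, rfl⟩)
  have hym : ∀ j, y j ∈ F := fun j => Submodule.subset_span (Or.inr ⟨j, rfl⟩)
  set x' : Fin M → EuclideanSpace ℝ (Fin n) := fun i => L ⟨x i, hxm i⟩ with hx'def
  set y' : Fin M → EuclideanSpace ℝ (Fin n) := fun j => L ⟨y j, hym j⟩ with hy'def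
  have hx' : ∀ i, ‖x' i‖ ≤ 1 := by
    intro i
    rw [hx'def]
    rw [LinearIsometryEquiv.norm_map]
    exact hx i
  have hy' : ∀ j, ‖y' j‖ ≤ 1 := by
    intro j
    rw [hy'def]
    rw [LinearIsometryEquiv.norm_map]
    exact hy j
  have hinner : ∀ i j, (inner ℝ (x' i) (y' j) : ℝ) = (inner ℝ (x i) (y j) : ℝ) := by
    intro i j
    rw [hx'def, hy'def]
    rw [LinearIsometryEquiv.inner_map_map]
    exact (Submodule.coe_inner F _ _)
  have key : ∀ K ∈ S, |∑ i, ∑ j, T i j * (inner ℝ (x i) (y j) : ℝ)| ≤ K * signSup T := by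
    intro K hK
    have h := hK.2 n M T x' y' hx' hy'
    rwa [show (∑ i, ∑ j, T i j * (inner ℝ (x' i) (y' j) : ℝ))
        = ∑ i, ∑ j, T i j * (inner ℝ (x i) (y j) : ℝ) from
      Finset.sum_congr rfl fun i _ => Finset.sum_congr rfl fun j _ => by
        rw [hinner i j]] at h
  rw [hRG]
  rcases eq_or_lt_of_le (GrothAux.signSup_nonneg T) with hB | hB
  · have h := key 96 h96
    rw [← hB, mul_zero] at h
    rw [← hB, mul_zero]
    exact h
  · have hne : S.Nonempty := ⟨96, h96⟩
    have hdiv : ∀ K ∈ S, |∑ i, ∑ j, T i j * (inner ℝ (x i) (y j) : ℝ)| / signSup T ≤ K :=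
      fun K hK => (div_le_iff₀ hB).2 (by have := key K hK; linarith)
    have hle := le_csInf hne hdiv
    rw [div_le_iff₀ hB] at hle
    linarith
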